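/- For all real x, y, t with |y t| < 1, the generating function of the two-variable Laguerre polynomials satisfies Σ_{n=0}^{∞} tⁿ · L_n(x, y) = (1 − y t)^{−1} · exp(−x t / (1 − y t)), the series on the left converging. -/

import Mathlib

open Finset

/-- The two-variable Laguerre polynomials. -/
noncomputable def laguerre2 (n : ℕ) (x y : ℝ) : ℝ :=
  (n.factorial : ℝ) * ∑ k ∈ Finset.range (n + 1),
    (-1 : ℝ) ^ k * x ^ k * y ^ (n - k) /
      (((n - k).factorial : ℝ) * (k.factorial : ℝ) ^ 2)

theorem laguerre2_generating_function (x y t : ℝ) (h : |y * t| < 1) :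
    HasSum (fun n : ℕ => t ^ n * laguerre2 n x y)
      ((1 - y * t)⁻¹ * Real.exp (-(x * t) / (1 - y * t))) := by
  set r : ℝ := y * t with hr_def
  set s : ℝ := -(x * t) with hs_def
  have hr : ‖r‖ < 1 := by simpa [Real.norm_eq_abs] using h
  have hr' : ‖|r|‖ < 1 := by rwa [Real.norm_eq_abs, abs_abs]
  have h1r : (1 : ℝ) - r ≠ 0 := by
    intro hc
    have h2 : |r| < 1 := h
    rw [sub_eq_zero] at hc
    simp [← hc] at h2
  -- the double-indexed family
  set F : ℕ × ℕ → ℝ := fun p =>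
    ((p.1 + p.2).choose p.1 : ℝ) / (p.1.factorial : ℝ) * s ^ p.1 * r ^ p.2 with hF_def
  -- fiberwise sums
  have fiber : ∀ k : ℕ, HasSum (fun m => F (k, m))
      (s ^ k / (k.factorial : ℝ) * (1 / (1 - r) ^ (k + 1))) := by
    intro k
    have h2 := (hasSum_choose_mul_geometric_of_norm_lt_one (𝕜 := ℝ) k hr).mul_left
      (s ^ k / (k.factorial : ℝ))
    refine h2.congr_fun fun m => ?_
    simp only [hF_def, Nat.add_comm k m]
    ring
  -- the sum over k of fiber sums
  have outer : HasSum (fun k : ℕ => s ^ k / (k.factorial : ℝ) * (1 / (1 - r) ^ (k + 1)))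
      ((1 - r)⁻¹ * Real.exp (s / (1 - r))) := by
    have he : HasSum (fun k : ℕ => (s / (1 - r)) ^ k / (k.factorial : ℝ))
        (Real.exp (s / (1 - r))) := by
      rw [Real.exp_eq_exp_ℝ]
      exact NormedSpace.expSeries_div_hasSum_exp _
    refine (he.mul_left ((1 - r)⁻¹)).congr_fun fun k => ?_
    rw [div_pow, pow_succ, one_div, mul_inv]
    ring
  -- summability of F
  have habs : Summable fun p : ℕ × ℕ => |F p| := by
    rw [show (fun p : ℕ × ℕ => |F p|) = fun p : ℕ × ℕ =>
        ((p.1 + p.2).choose p.1 : ℝ) / (p.1.factorial : ℝ) * |s| ^ p.1 * |r| ^ p.2 from ?_]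
    · apply (summable_prod_of_nonneg ?_).2
      constructor
      · intro k
        have h2 := ((hasSum_choose_mul_geometric_of_norm_lt_one (𝕜 := ℝ) (r := |r|) k
            hr').mul_left (|s| ^ k / (k.factorial : ℝ))).summable
        refine h2.congr fun m => ?_
        simp only [Nat.add_comm k m]
        ring
      · have key : ∀ k : ℕ, ∑' m : ℕ,
            ((k + m).choose k : ℝ) / (k.factorial : ℝ) * |s| ^ k * |r| ^ m
            = |s| ^ k / (k.factorial : ℝ) * (1 / (1 - |r|) ^ (k + 1)) := by
          intro k
          have h2 := (hasSum_choose_mul_geometric_of_norm_lt_one (𝕜 := ℝ) (r := |r|) k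
              hr').mul_left (|s| ^ k / (k.factorial : ℝ))
          refine HasSum.tsum_eq (h2.congr_fun fun m => ?_)
          simp only [Nat.add_comm k m]
          ring
        simp only [key]
        have he : Summable (fun k : ℕ => (|s| / (1 - |r|)) ^ k / (k.factorial : ℝ)) :=
          Real.summable_pow_div_factorial _
        refine ((he.mul_left ((1 - |r|)⁻¹)).congr fun k => ?_)
        rw [div_pow, pow_succ, one_div, mul_inv]
        ring
      · intro p
        positivity
    · funext p
      rw [abs_mul, abs_mul, abs_pow, abs_pow]
      congr 2
      rw [abs_div]
      simp [Nat.abs_cast]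
  have hsummable : Summable F := habs.of_abs
  -- total sum of F
  have htotal : HasSum F ((1 - r)⁻¹ * Real.exp (s / (1 - r))) := by
    have hF := hsummable.hasSum
    have h2 := hF.prod_fiberwise fiber
    rwa [h2.unique outer] at hF
  -- reindex over diagonals
  have hsigma := (Finset.HasAntidiagonal.sigmaAntidiagonalEquivProd (A := ℕ)).hasSum_iff.2 htotal
  have hdiag : HasSum (fun n : ℕ => ∑ p ∈ Finset.HasAntidiagonal.antidiagonal n, F p)
      ((1 - r)⁻¹ * Real.exp (s / (1 - r))) := by
    refine hsigma.sigma fun n => ?_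
    have h2 := hasSum_fintype (fun p : (Finset.HasAntidiagonal.antidiagonal n : Finset (ℕ × ℕ)) => F p)
    simpa [Finset.sum_attach] using h2
  -- identify diagonal sums with t^n * laguerre2 n x y
  refine hdiag.congr_fun fun n => ?_
  rw [Finset.Nat.sum_antidiagonal_eq_sum_range_succ_mk]
  rw [laguerre2, Finset.mul_sum, Finset.mul_sum]
  refine Finset.sum_congr rfl fun k hk => ?_
  have hkn : k ≤ n := Nat.lt_succ_iff.mp (Finset.mem_range.mp hk)
  simp only [hF_def]
  have hadd : k + (n - k) = n := Nat.add_sub_cancel' hkn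
  rw [hadd]
  have hchoose : (n.choose k : ℝ) = (n.factorial : ℝ) /
      ((k.factorial : ℝ) * ((n - k).factorial : ℝ)) := by
    rw [Nat.cast_choose ℝ hkn]
  have hsk : s ^ k = (-1 : ℝ) ^ k * x ^ k * t ^ k := by
    rw [hs_def, show -(x * t) = (-1) * x * t by ring, mul_pow, mul_pow]
  have hrk : r ^ (n - k) = y ^ (n - k) * t ^ (n - k) := by rw [hr_def, mul_pow]
  have htn : t ^ k * t ^ (n - k) = t ^ n := by rw [← pow_add, hadd]
  have hk0 : (k.factorial : ℝ) ≠ 0 := Nat.cast_ne_zero.2 k.factorial_ne_zero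
  have hnk0 : ((n - k).factorial : ℝ) ≠ 0 := Nat.cast_ne_zero.2 (n - k).factorial_ne_zero
  rw [hchoose, hsk, hrk, ← htn]
  field_simp
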